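/- The vector fields H₁ and H₂ commute, where H₁ = −h∂_h − 6φ∂_φ − 2q∂_q + (3h³/2)cosψ ∂_θ + (3h³/2)sinψ ∂_φ + 3sin(2ψ)∂_ψ − 3cos(2ψ)h∂_h − (h³/2)sin(3ψ)∂_φ + (h³/2)cos(3ψ)∂_θ and H₂ = −6θ∂_θ − 2h∂_h − 4q∂_q − 6φ∂_φ, as vector fields on ℝ⁵ with coordinates (θ, φ, h, q, ψ). -/

import Mathlib

/-- Lie bracket of vector fields on ℝⁿ. -/
noncomputable def vfBracket {n : ℕ} (X Y : (Fin n → ℝ) → (Fin n → ℝ)) :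
    (Fin n → ℝ) → (Fin n → ℝ) :=
  fun x => fderiv ℝ Y x (X x) - fderiv ℝ X x (Y x)

/-- H₁ on ℝ⁵, coordinates (θ,φ,h,q,ψ) = (0,1,2,3,4). -/
noncomputable def H1 : (Fin 5 → ℝ) → (Fin 5 → ℝ) := fun x =>
  ![(3 * (x 2) ^ 3 / 2) * Real.cos (x 4) + ((x 2) ^ 3 / 2) * Real.cos (3 * x 4),
    -6 * x 1 + (3 * (x 2) ^ 3 / 2) * Real.sin (x 4) - ((x 2) ^ 3 / 2) * Real.sin (3 * x 4),
    -(x 2) - 3 * Real.cos (2 * x 4) * x 2,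
    -2 * x 3,
    3 * Real.sin (2 * x 4)]

/-- H₂ on ℝ⁵. -/
noncomputable def H2 : (Fin 5 → ℝ) → (Fin 5 → ℝ) := fun x =>
  ![-6 * x 0, -6 * x 1, -2 * x 2, -4 * x 3, 0]

lemma fin5_mk_two (h : 2 < 5) : (⟨2, h⟩ : Fin 5) = 2 := rfl
lemma fin5_mk_three (h : 3 < 5) : (⟨3, h⟩ : Fin 5) = 3 := rfl
lemma fin5_mk_four (h : 4 < 5) : (⟨4, h⟩ : Fin 5) = 4 := rfl

/-- the vector fields H₁ and H₂ commute. -/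
theorem stmt10 : ∀ x : Fin 5 → ℝ, vfBracket H1 H2 x = 0 := by
  intro x
  have hp : ∀ i : Fin 5, HasFDerivAt (fun y : Fin 5 → ℝ => y i)
      (ContinuousLinearMap.proj (R := ℝ) i) x := fun i => hasFDerivAt_apply i x
  have hc0 : HasFDerivAt (fun y : Fin 5 → ℝ =>
      3 * y 2 ^ 3 / 2 * Real.cos (y 4) + y 2 ^ 3 / 2 * Real.cos (3 * y 4)) _ x :=
    ((((((hasDerivAt_pow 3 (x 2)).const_mul (3:ℝ)).div_const 2).comp_hasFDerivAt x (hp 2)).mul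
      ((Real.hasDerivAt_cos (x 4)).comp_hasFDerivAt x (hp 4))).add
    ((((hasDerivAt_pow 3 (x 2)).div_const 2).comp_hasFDerivAt x (hp 2)).mul
      ((Real.hasDerivAt_cos (3 * x 4)).comp_hasFDerivAt x ((hp 4).const_mul 3))) :)
  have hc1 : HasFDerivAt (fun y : Fin 5 → ℝ =>
      -6 * y 1 + 3 * y 2 ^ 3 / 2 * Real.sin (y 4) - y 2 ^ 3 / 2 * Real.sin (3 * y 4)) _ x :=
    ((((hp 1).const_mul (-6)).add
      (((((hasDerivAt_pow 3 (x 2)).const_mul (3:ℝ)).div_const 2).comp_hasFDerivAt x (hp 2)).mul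
        ((Real.hasDerivAt_sin (x 4)).comp_hasFDerivAt x (hp 4)))).sub
    ((((hasDerivAt_pow 3 (x 2)).div_const 2).comp_hasFDerivAt x (hp 2)).mul
      ((Real.hasDerivAt_sin (3 * x 4)).comp_hasFDerivAt x ((hp 4).const_mul 3))) :)
  have hc2 : HasFDerivAt (fun y : Fin 5 → ℝ =>
      -(y 2) - 3 * Real.cos (2 * y 4) * y 2) _ x :=
    (((hp 2).neg).sub
      ((((Real.hasDerivAt_cos (2 * x 4)).comp_hasFDerivAt x ((hp 4).const_mul 2)).const_mul 3).mul
        (hp 2)) :)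
  have hc3 : HasFDerivAt (fun y : Fin 5 → ℝ => -2 * y 3) _ x := (hp 3).const_mul (-2)
  have hc4 : HasFDerivAt (fun y : Fin 5 → ℝ => 3 * Real.sin (2 * y 4)) _ x :=
    (((Real.hasDerivAt_sin (2 * x 4)).comp_hasFDerivAt x ((hp 4).const_mul 2)).const_mul 3 :)
  have hd0 : HasFDerivAt (fun y : Fin 5 → ℝ => -6 * y 0) _ x := (hp 0).const_mul (-6)
  have hd1 : HasFDerivAt (fun y : Fin 5 → ℝ => -6 * y 1) _ x := (hp 1).const_mul (-6)
  have hd2 : HasFDerivAt (fun y : Fin 5 → ℝ => -2 * y 2) _ x := (hp 2).const_mul (-2)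
  have hd3 : HasFDerivAt (fun y : Fin 5 → ℝ => -4 * y 3) _ x := (hp 3).const_mul (-4)
  have hd4 : HasFDerivAt (fun _ : Fin 5 → ℝ => (0:ℝ)) (0 : (Fin 5 → ℝ) →L[ℝ] ℝ) x :=
    hasFDerivAt_const 0 x
  have e1 : ∀ i, DifferentiableAt ℝ (fun y => H1 y i) x := by
    intro i
    fin_cases i <;> simp only [H1, Matrix.cons_val_zero, Matrix.cons_val_one, Matrix.head_cons,
      Matrix.cons_val_two, Matrix.tail_cons, Matrix.cons_val_three, Matrix.cons_val_four]
    · exact hc0.differentiableAt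
    · exact hc1.differentiableAt
    · exact hc2.differentiableAt
    · exact hc3.differentiableAt
    · exact hc4.differentiableAt
  have e2 : ∀ i, DifferentiableAt ℝ (fun y => H2 y i) x := by
    intro i
    fin_cases i <;> simp only [H2, Matrix.cons_val_zero, Matrix.cons_val_one, Matrix.head_cons,
      Matrix.cons_val_two, Matrix.tail_cons, Matrix.cons_val_three, Matrix.cons_val_four]
    · exact hd0.differentiableAt
    · exact hd1.differentiableAt
    · exact hd2.differentiableAt
    · exact hd3.differentiableAt
    · exact hd4.differentiableAt
  have f1 : fderiv ℝ H1 x = ContinuousLinearMap.pi fun i => fderiv ℝ (fun y => H1 y i) x :=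
    fderiv_pi e1
  have f2 : fderiv ℝ H2 x = ContinuousLinearMap.pi fun i => fderiv ℝ (fun y => H2 y i) x :=
    fderiv_pi e2
  funext i
  simp only [vfBracket, Pi.sub_apply, Pi.zero_apply, f1, f2, ContinuousLinearMap.pi_apply]
  fin_cases i <;>
    simp only [H1, H2, Fin.zero_eta, Fin.mk_one, fin5_mk_two, fin5_mk_three, fin5_mk_four,
      Matrix.cons_val_zero, Matrix.cons_val_one, Matrix.head_cons,
      Matrix.cons_val_two, Matrix.tail_cons, Matrix.cons_val_three, Matrix.cons_val_four]
  · rw [hd0.fderiv, hc0.fderiv]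
    simp [ContinuousLinearMap.proj_apply, H1, H2]
    ring
  · rw [hd1.fderiv, hc1.fderiv]
    simp [ContinuousLinearMap.proj_apply, H1, H2]
    ring
  · rw [hd2.fderiv, hc2.fderiv]
    simp [ContinuousLinearMap.proj_apply, H1, H2]
    ring
  · rw [hd3.fderiv, hc3.fderiv]
    simp [ContinuousLinearMap.proj_apply, H1, H2]
    ring
  · rw [hd4.fderiv, hc4.fderiv]
    simp [ContinuousLinearMap.proj_apply, H1, H2]
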